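/- The Klein bottle group D = ⟨a, b | b⁻¹ab = a⁻¹⟩ has exactly four right-orders, and each of them is discrete with a or a⁻¹ as the minimal positive element. -/

import Mathlib

variable {G : Type*} [Group G]

/-- A right order on a group: a strict total order invariant under right multiplication. -/
def IsRightOrder (r : G → G → Prop) : Prop :=
  IsStrictTotalOrder G r ∧ ∀ f g h : G, r f g → r (f * h) (g * h)

/-- `a` is the least element greater than the identity for the order `r`. -/
def LeastPos (r : G → G → Prop) (a : G) : Prop :=
  r 1 a ∧ ∀ g : G, r 1 g → g = a ∨ r a g

/-- The single defining relation `b * a * b⁻¹ * a` of the Klein bottle group,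
with `b = of true` and `a = of false`; it says `b a b⁻¹ = a⁻¹`. -/
def kleinRels : Set (FreeGroup Bool) :=
  {FreeGroup.of true * FreeGroup.of false * (FreeGroup.of true)⁻¹ * FreeGroup.of false}

/-- The Klein bottle group `D = ⟨a, b | b a b⁻¹ = a⁻¹⟩`. -/
abbrev KleinBottleGroup := PresentedGroup kleinRels

namespace KleinAux
open SemidirectProduct

abbrev K := KleinBottleGroup
def a : K := PresentedGroup.of false
def b : K := PresentedGroup.of true

theorem rel_ba : b * a * b⁻¹ = a⁻¹ := by
  have h : PresentedGroup.mk kleinRels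
      (FreeGroup.of true * FreeGroup.of false * (FreeGroup.of true)⁻¹ * FreeGroup.of false) = 1 :=
    (QuotientGroup.eq_one_iff _).mpr (Subgroup.subset_normalClosure rfl)
  simp only [map_mul, map_inv] at h
  exact mul_eq_one_iff_eq_inv.mp h

def φ : Multiplicative ℤ →* MulAut (Multiplicative ℤ) :=
  zpowersHom _ (MulEquiv.inv (Multiplicative ℤ))

abbrev Kc := SemidirectProduct (Multiplicative ℤ) (Multiplicative ℤ) φ

def fgen : Bool → Kc
  | false => inl (Multiplicative.ofAdd 1)
  | true => inr (Multiplicative.ofAdd 1)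

def π : K →* Kc :=
  PresentedGroup.toGroup (f := fgen) (by
    intro r hr
    rw [Set.mem_singleton_iff.mp hr]
    simp only [map_mul, map_inv, FreeGroup.lift_apply_of]
    show (inr (Multiplicative.ofAdd 1) : Kc) * inl (Multiplicative.ofAdd 1) *
        (inr (Multiplicative.ofAdd 1))⁻¹ * inl (Multiplicative.ofAdd 1) = 1
    rw [show (inr (Multiplicative.ofAdd 1) : Kc) * inl (Multiplicative.ofAdd 1) *
        (inr (Multiplicative.ofAdd 1))⁻¹ = inl (φ (Multiplicative.ofAdd 1) (Multiplicative.ofAdd 1))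
      from (inl_aut _ _).symm, ← map_mul]
    convert map_one inl using 2; rfl)

@[simp] theorem π_a : π a = inl (Multiplicative.ofAdd 1) := PresentedGroup.toGroup.of _
@[simp] theorem π_b : π b = inr (Multiplicative.ofAdd 1) := PresentedGroup.toGroup.of _


def mExp (g : K) : ℤ := Multiplicative.toAdd (π g).left
def nExp (g : K) : ℤ := Multiplicative.toAdd (π g).right

@[simp] theorem mExp_one : mExp (1 : K) = 0 := by simp [mExp]
@[simp] theorem nExp_one : nExp (1 : K) = 0 := by simp [nExp]

theorem nExp_mul (g h : K) : nExp (g * h) = nExp g + nExp h := by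
  simp [nExp, map_mul, mul_right]

theorem nExp_inv (g : K) : nExp g⁻¹ = - nExp g := by
  have := nExp_mul g g⁻¹
  simp only [mul_inv_cancel, nExp_one] at this
  omega

theorem mExp_mul_of (g h : K) (hg : nExp g = 0) : mExp (g * h) = mExp g + mExp h := by
  have hr : (π g).right = 1 := by
    have : Multiplicative.toAdd (π g).right = Multiplicative.toAdd (1 : Multiplicative ℤ) := hg
    exact Multiplicative.toAdd.injective this
  simp [mExp, map_mul, mul_left, hr]

theorem mExp_inv_of (g : K) (hg : nExp g = 0) : mExp g⁻¹ = - mExp g := by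
  have := mExp_mul_of g g⁻¹ hg
  simp only [mul_inv_cancel, mExp_one] at this
  omega

theorem normal_form (m n : ℤ) : mExp (a ^ m * b ^ n) = m ∧ nExp (a ^ m * b ^ n) = n := by
  have hπ : π (a ^ m * b ^ n) = ⟨Multiplicative.ofAdd m, Multiplicative.ofAdd n⟩ := by
    rw [map_mul, map_zpow, map_zpow, π_a, π_b, ← map_zpow inl, ← map_zpow inr,
      mk_eq_inl_mul_inr]
    congr 1 <;> simp [← ofAdd_zsmul]
  constructor <;> simp [mExp, nExp, hπ]

theorem rel_b'a : b⁻¹ * a * b = a⁻¹ := by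
  have h1 : b⁻¹ * a⁻¹ * b = a := by rw [← rel_ba]; group
  calc b⁻¹ * a * b = (b⁻¹ * a⁻¹ * b)⁻¹ := by group
    _ = a⁻¹ := by rw [h1]

theorem conj_b_zpow (m : ℤ) : b * a ^ m * b⁻¹ = a ^ (-m) := by
  rw [← conj_zpow, rel_ba, inv_zpow']

theorem conj_b'_zpow (m : ℤ) : b⁻¹ * a ^ m * b = a ^ (-m) := by
  rw [show b⁻¹ * a ^ m * b = b⁻¹ * a ^ m * b⁻¹⁻¹ by rw [inv_inv], ← conj_zpow, inv_inv, rel_b'a,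
    inv_zpow']

theorem b_zpow_comm (n : ℤ) : ∀ p : ℤ, ∃ s : ℤ, b ^ n * a ^ p = a ^ s * b ^ n := by
  induction n using Int.induction_on with
  | zero => intro p; exact ⟨p, by simp⟩
  | succ k ih =>
    intro p
    obtain ⟨s, hs⟩ := ih (-p)
    refine ⟨s, ?_⟩
    calc b ^ ((k : ℤ) + 1) * a ^ p = b ^ (k : ℤ) * (b * a ^ p * b⁻¹) * b := by
          rw [zpow_add, zpow_one]; group
      _ = (b ^ (k : ℤ) * a ^ (-p)) * b := by rw [conj_b_zpow]
      _ = a ^ s * b ^ ((k : ℤ) + 1) := by rw [hs, zpow_add, zpow_one, mul_assoc]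
  | pred k ih =>
    intro p
    obtain ⟨s, hs⟩ := ih (-p)
    refine ⟨s, ?_⟩
    calc b ^ (-(k : ℤ) - 1) * a ^ p = b ^ (-(k : ℤ)) * (b⁻¹ * a ^ p * b) * b⁻¹ := by
          rw [sub_eq_add_neg, zpow_add, zpow_neg_one]; group
      _ = (b ^ (-(k : ℤ)) * a ^ (-p)) * b⁻¹ := by rw [conj_b'_zpow]
      _ = a ^ s * b ^ (-(k : ℤ) - 1) := by
          rw [hs, sub_eq_add_neg, zpow_add, zpow_neg_one, mul_assoc]

theorem decomp (g : K) : g = a ^ mExp g * b ^ nExp g := by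
  have hex : ∃ m n : ℤ, g = a ^ m * b ^ n := by
    have htop : g ∈ Subgroup.closure (Set.range (PresentedGroup.of : Bool → K)) := by
      rw [PresentedGroup.closure_range_of]; trivial
    induction htop using Subgroup.closure_induction with
    | mem x hx =>
      obtain ⟨t, rfl⟩ := hx
      cases t
      · exact ⟨1, 0, by simp [a]⟩
      · exact ⟨0, 1, by simp [b]⟩
    | one => exact ⟨0, 0, by simp⟩
    | mul x y _ _ hx hy =>
      obtain ⟨m, n, rfl⟩ := hx
      obtain ⟨p, q, rfl⟩ := hy
      obtain ⟨s, hs⟩ := b_zpow_comm n p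
      refine ⟨m + s, n + q, ?_⟩
      rw [show a ^ m * b ^ n * (a ^ p * b ^ q) = a ^ m * (b ^ n * a ^ p) * b ^ q by group, hs]
      rw [zpow_add, zpow_add]; group
    | inv x _ hx =>
      obtain ⟨m, n, rfl⟩ := hx
      obtain ⟨s, hs⟩ := b_zpow_comm (-n) (-m)
      refine ⟨s, -n, ?_⟩
      rw [show (a ^ m * b ^ n)⁻¹ = b ^ (-n) * a ^ (-m) by group, hs]
  obtain ⟨m, n, rfl⟩ := hex
  obtain ⟨hm, hn⟩ := normal_form m n
  rw [hm, hn]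

theorem eq_one_of_exps (g : K) (hm : mExp g = 0) (hn : nExp g = 0) : g = 1 := by
  have := decomp g
  rw [hm, hn] at this
  simpa using this


/-- positivity cone with signs ε δ ∈ {±1} -/
def Pos (ε δ : ℤ) (g : K) : Prop :=
  0 < δ * nExp g ∨ (nExp g = 0 ∧ 0 < ε * mExp g)

def R (ε δ : ℤ) (f g : K) : Prop := Pos ε δ (g * f⁻¹)

theorem pos_mul {ε δ : ℤ} {x y : K} (hx : Pos ε δ x) (hy : Pos ε δ y) : Pos ε δ (y * x) := by
  rcases hx with hx | ⟨hx0, hxm⟩ <;> rcases hy with hy | ⟨hy0, hym⟩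
  · left; rw [nExp_mul, mul_add]; positivity
  · left; rw [nExp_mul, hy0, zero_add]; exact hx
  · left; rw [nExp_mul, hx0, add_zero]; exact hy
  · right
    refine ⟨by rw [nExp_mul, hx0, hy0, add_zero], ?_⟩
    rw [mExp_mul_of y x hy0, mul_add]
    positivity

theorem pos_trichotomy {ε δ : ℤ} (hε : ε = 1 ∨ ε = -1) (hδ : δ = 1 ∨ δ = -1) (x : K) :
    Pos ε δ x ∨ x = 1 ∨ Pos ε δ x⁻¹ := by
  rcases lt_trichotomy (nExp x) 0 with hn | hn | hn
  · rcases hδ with rfl | rfl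
    · right; right; left; rw [nExp_inv]; omega
    · left; left; omega
  · rcases lt_trichotomy (mExp x) 0 with hm | hm | hm
    · rcases hε with rfl | rfl
      · right; right; right
        exact ⟨by rw [nExp_inv]; omega, by rw [mExp_inv_of x hn]; omega⟩
      · left; right; exact ⟨hn, by omega⟩
    · right; left; exact eq_one_of_exps x hm hn
    · rcases hε with rfl | rfl
      · left; right; exact ⟨hn, by omega⟩
      · right; right; right
        exact ⟨by rw [nExp_inv]; omega, by rw [mExp_inv_of x hn]; omega⟩
  · rcases hδ with rfl | rfl
    · left; left; omega
    · right; right; left; rw [nExp_inv]; omega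

theorem pos_not_one {ε δ : ℤ} (h : Pos ε δ (1 : K)) : False := by
  rcases h with h | ⟨_, h⟩ <;> simp at h

theorem isRightOrder_R {ε δ : ℤ} (hε : ε = 1 ∨ ε = -1) (hδ : δ = 1 ∨ δ = -1) :
    IsRightOrder (R ε δ) := by
  refine ⟨{ trichotomous := ?_, irrefl := ?_, trans := ?_ }, ?_⟩
  · intro f g hfg hgf
    rcases pos_trichotomy hε hδ (g * f⁻¹) with h | h | h
    · exact absurd h hfg
    · exact (mul_inv_eq_one.mp h).symm
    · refine absurd ?_ hgf
      show Pos ε δ (f * g⁻¹)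
      rwa [show f * g⁻¹ = (g * f⁻¹)⁻¹ by group]
  · intro g h
    rw [R, mul_inv_cancel] at h
    exact pos_not_one h
  · intro f g h h1 h2
    have := pos_mul (x := g * f⁻¹) (y := h * g⁻¹) h1 h2
    rwa [show h * g⁻¹ * (g * f⁻¹) = h * f⁻¹ by group] at this
  · intro f g h hfg
    show Pos ε δ (g * h * (f * h)⁻¹)
    rwa [show g * h * (f * h)⁻¹ = g * f⁻¹ by group]


section Classify

variable {r : K → K → Prop} (hsto : IsStrictTotalOrder K r)
  (hinv : ∀ f g h : K, r f g → r (f * h) (g * h))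

include hsto hinv

omit hsto in
theorem r_iff (f g : K) : r f g ↔ r 1 (g * f⁻¹) := by
  constructor
  · intro h
    have := hinv f g f⁻¹ h
    rwa [mul_inv_cancel] at this
  · intro h
    have := hinv 1 (g * f⁻¹) f h
    rwa [one_mul, inv_mul_cancel_right] at this

theorem P_mul {x y : K} (hx : r 1 x) (hy : r 1 y) : r 1 (x * y) := by
  haveI := hsto
  exact _root_.trans_of r hy (by simpa using hinv 1 x y hx)

theorem P_not_inv {x : K} (hx : r 1 x) (hx' : r 1 x⁻¹) : False := by
  haveI := hsto
  exact irrefl_of r 1 (by simpa using P_mul hsto hinv hx hx')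

theorem P_zpow {x : K} (hx : r 1 x) : ∀ t : ℤ, 0 < t → r 1 (x ^ t) := by
  intro t ht
  obtain ⟨k, rfl⟩ : ∃ k : ℕ, t = (k : ℤ) + 1 :=
    ⟨(t - 1).toNat, by omega⟩
  induction k with
  | zero => simpa using hx
  | succ k ih =>
    have h1 : x ^ (((k+1 : ℕ) : ℤ) + 1) = x ^ ((k : ℤ) + 1) * x := by
      rw [show (((k+1 : ℕ) : ℤ) + 1) = ((k:ℤ)+1)+1 by push_cast; ring, zpow_add, zpow_one]
    rw [h1]
    exact P_mul hsto hinv (ih (by omega)) hx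

theorem L1 {c : K} (hc : c * a * c⁻¹ = a⁻¹) (hcP : r 1 c) (hcn : nExp c ≠ 0) (m : ℤ) :
    r 1 (a ^ m * c) := by
  haveI := hsto
  set s := a ^ m * c with hs
  have hconj : c * a ^ m * c⁻¹ = a ^ (-m) := by rw [← conj_zpow, hc, inv_zpow']
  have hss : s * s = c * c := by
    have : s * s = a ^ m * (c * a ^ m * c⁻¹) * (c * c) := by rw [hs]; group
    rw [this, hconj, ← zpow_add]
    simp
  have hcc : r 1 (c * c) := P_mul hsto hinv hcP hcP
  rcases trichotomous_of r 1 s with h | h | h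
  · exact h
  · exfalso
    rw [← h, one_mul] at hss
    have : nExp (c * c) = 0 := by rw [← hss]; simp
    rw [nExp_mul] at this
    exact absurd this (by omega)
  · exfalso
    have hsinv : r 1 s⁻¹ := by
      have := hinv s 1 s⁻¹ h
      rwa [mul_inv_cancel, one_mul] at this
    have h2 : r 1 (s⁻¹ * s⁻¹) := P_mul hsto hinv hsinv hsinv
    have h3 : s⁻¹ * s⁻¹ = (c * c)⁻¹ := by rw [← mul_inv_rev, hss]
    rw [h3] at h2
    exact P_not_inv hsto hinv hcc h2

omit hsto hinv in
theorem nExp_b_zpow (d : ℤ) : nExp (b ^ d) = d := by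
  have := (normal_form 0 d).2
  simpa using this

omit hsto hinv in
theorem mExp_a_zpow (t : ℤ) : mExp (a ^ t) = t := by
  have := (normal_form t 0).1
  simpa using this

omit hsto hinv in
theorem nExp_a_zpow (t : ℤ) : nExp (a ^ t) = 0 := by
  have := (normal_form t 0).2
  simpa using this

omit hsto hinv in
theorem conj_bd (δ : ℤ) (hδ : δ = 1 ∨ δ = -1) : b ^ δ * a * (b ^ δ)⁻¹ = a⁻¹ := by
  rcases hδ with rfl | rfl
  · rw [zpow_one]; exact rel_ba
  · rw [zpow_neg_one, inv_inv]; exact rel_b'a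

theorem cone_subset_P {ε δ : ℤ} (hε : ε = 1 ∨ ε = -1) (hδ : δ = 1 ∨ δ = -1)
    (ha : r 1 (a ^ ε)) (hb : r 1 (b ^ δ)) {g : K} (hg : Pos ε δ g) : r 1 g := by
  have hε2 : ε * ε = 1 := by rcases hε with rfl | rfl <;> norm_num
  have hδ2 : δ * δ = 1 := by rcases hδ with rfl | rfl <;> norm_num
  rcases hg with hn | ⟨hn, hm⟩
  · set m := mExp g with hm'
    set n := nExp g with hn'
    have key : g = (a ^ m * b ^ δ) * (b ^ δ) ^ (δ * n - 1) := by
      rw [decomp g, ← hm', ← hn', mul_assoc]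
      congr 1
      symm
      calc b ^ δ * (b ^ δ) ^ (δ * n - 1) = (b ^ δ) ^ (1 + (δ * n - 1)) := by
            rw [zpow_add, zpow_one]
        _ = (b ^ δ) ^ (δ * n) := by congr 1; ring
        _ = b ^ n := by rw [← zpow_mul, show δ * (δ * n) = n by rw [← mul_assoc, hδ2, one_mul]]
    have hL1 : r 1 (a ^ m * b ^ δ) :=
      L1 hsto hinv (conj_bd δ hδ) hb (by rw [nExp_b_zpow]; omega) m
    rcases eq_or_lt_of_le (by omega : (1:ℤ) ≤ δ * n) with h1 | h1
    · rw [key, ← h1]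
      simpa using hL1
    · rw [key]
      exact P_mul hsto hinv hL1 (P_zpow hsto hinv hb (δ * n - 1) (by omega))
  · have key : g = (a ^ ε) ^ (ε * mExp g) := by
      rw [← zpow_mul, show ε * (ε * mExp g) = mExp g by rw [← mul_assoc, hε2, one_mul]]
      conv_lhs => rw [decomp g, hn, zpow_zero, mul_one]
    rw [key]
    exact P_zpow hsto hinv ha (ε * mExp g) hm

theorem classification :
    ∃ ε δ : ℤ, (ε = 1 ∨ ε = -1) ∧ (δ = 1 ∨ δ = -1) ∧ r = R ε δ := by
  haveI := hsto
  have hma : mExp a = 1 := by simpa using (normal_form 1 0).1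
  have hnb : nExp b = 1 := by simpa using (normal_form 0 1).2
  have hane : (a : K) ≠ 1 := by intro h; rw [h] at hma; simp at hma
  have hbne : (b : K) ≠ 1 := by intro h; rw [h] at hnb; simp at hnb
  obtain ⟨ε, hε, haP⟩ : ∃ ε : ℤ, (ε = 1 ∨ ε = -1) ∧ r 1 (a ^ ε) := by
    rcases trichotomous_of r 1 a with h | h | h
    · exact ⟨1, Or.inl rfl, by simpa using h⟩
    · exact absurd h.symm hane
    · refine ⟨-1, Or.inr rfl, ?_⟩
      rw [zpow_neg_one]
      have := hinv a 1 a⁻¹ h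
      rwa [mul_inv_cancel, one_mul] at this
  obtain ⟨δ, hδ, hbP⟩ : ∃ δ : ℤ, (δ = 1 ∨ δ = -1) ∧ r 1 (b ^ δ) := by
    rcases trichotomous_of r 1 b with h | h | h
    · exact ⟨1, Or.inl rfl, by simpa using h⟩
    · exact absurd h.symm hbne
    · refine ⟨-1, Or.inr rfl, ?_⟩
      rw [zpow_neg_one]
      have := hinv b 1 b⁻¹ h
      rwa [mul_inv_cancel, one_mul] at this
  have hPiff : ∀ x : K, r 1 x ↔ Pos ε δ x := by
    intro x
    constructor
    · intro hx
      rcases pos_trichotomy hε hδ x with h | rfl | h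
      · exact h
      · exact absurd hx (irrefl_of r 1)
      · exact absurd hx (fun hx' =>
          P_not_inv hsto hinv hx' (cone_subset_P hsto hinv hε hδ haP hbP h))
    · exact cone_subset_P hsto hinv hε hδ haP hbP
  refine ⟨ε, δ, hε, hδ, ?_⟩
  funext f g
  exact propext ((r_iff hinv f g).trans (hPiff _))

end Classify

theorem leastPos_R {ε δ : ℤ} (hε : ε = 1 ∨ ε = -1) (hδ : δ = 1 ∨ δ = -1) :
    LeastPos (R ε δ) (a ^ ε) := by
  have hε2 : ε * ε = 1 := by rcases hε with rfl | rfl <;> norm_num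
  constructor
  · show Pos ε δ (a ^ ε * 1⁻¹)
    rw [inv_one, mul_one]
    exact Or.inr ⟨nExp_a_zpow ε, by rw [mExp_a_zpow]; omega⟩
  · intro g hg
    have hg' : Pos ε δ g := by
      have : Pos ε δ (g * 1⁻¹) := hg
      rwa [inv_one, mul_one] at this
    rcases hg' with hn | ⟨hn, hm⟩
    · right
      show Pos ε δ (g * (a ^ ε)⁻¹)
      left
      rw [nExp_mul, nExp_inv, nExp_a_zpow, neg_zero, add_zero]
      exact hn
    · rcases eq_or_lt_of_le (by omega : (1:ℤ) ≤ ε * mExp g) with h1 | h1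
      · left
        have hmg : mExp g = ε := by
          have : ε * (ε * mExp g) = ε * 1 := by rw [← h1]
          rw [← mul_assoc, hε2, one_mul, mul_one] at this
          exact this
        conv_lhs => rw [decomp g, hn, hmg, zpow_zero, mul_one]
      · right
        show Pos ε δ (g * (a ^ ε)⁻¹)
        right
        have h2 : nExp (g * (a ^ ε)⁻¹) = 0 := by
          rw [nExp_mul, nExp_inv, nExp_a_zpow, neg_zero, add_zero]; exact hn
        refine ⟨h2, ?_⟩
        rw [mExp_mul_of g _ hn, ← zpow_neg, mExp_a_zpow, mul_add]
        have : ε * (-ε) = -1 := by rcases hε with rfl | rfl <;> norm_num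
        rw [this]
        omega

theorem R_one_b {ε δ : ℤ} : R ε δ 1 b ↔ 0 < δ := by
  show Pos ε δ (b * 1⁻¹) ↔ _
  rw [inv_one, mul_one]
  have hnb : nExp b = 1 := by simpa using (normal_form 0 1).2
  unfold Pos
  rw [hnb]
  omega

theorem R_one_a {ε δ : ℤ} : R ε δ 1 a ↔ 0 < ε := by
  show Pos ε δ (a * 1⁻¹) ↔ _
  rw [inv_one, mul_one]
  have hma : mExp a = 1 := by simpa using (normal_form 1 0).1
  have hna : nExp a = 0 := by simpa using (normal_form 1 0).2
  unfold Pos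
  rw [hma, hna]
  omega

theorem R_inj {ε δ ε' δ' : ℤ} (hε : ε = 1 ∨ ε = -1) (hδ : δ = 1 ∨ δ = -1)
    (hε' : ε' = 1 ∨ ε' = -1) (hδ' : δ' = 1 ∨ δ' = -1) (h : R ε δ = R ε' δ') :
    ε = ε' ∧ δ = δ' := by
  have h1 : (R ε δ 1 a) = (R ε' δ' 1 a) := by rw [h]
  have h2 : (R ε δ 1 b) = (R ε' δ' 1 b) := by rw [h]
  rw [R_one_a, R_one_a] at h1
  rw [R_one_b, R_one_b] at h2
  rw [eq_iff_iff] at h1 h2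
  constructor
  · rcases hε with rfl | rfl <;> rcases hε' with rfl | rfl <;> first | rfl | (exfalso; omega)
  · rcases hδ with rfl | rfl <;> rcases hδ' with rfl | rfl <;> first | rfl | (exfalso; omega)

end KleinAux


open KleinAux in
/-- The Klein bottle group has exactly four right orders, and each of them is discrete
with `a` or `a⁻¹` as the minimal positive element. -/
theorem stmt14 :
    ({r : KleinBottleGroup → KleinBottleGroup → Prop | IsRightOrder r}.ncard = 4) ∧
    ∀ r : KleinBottleGroup → KleinBottleGroup → Prop, IsRightOrder r →
      LeastPos r (PresentedGroup.of (rels := kleinRels) false) ∨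
      LeastPos r (PresentedGroup.of (rels := kleinRels) false)⁻¹ := by
  constructor
  · have hset : {r : KleinBottleGroup → KleinBottleGroup → Prop | IsRightOrder r} =
        {R 1 1, R 1 (-1), R (-1) 1, R (-1) (-1)} := by
      ext r
      simp only [Set.mem_setOf_eq, Set.mem_insert_iff, Set.mem_singleton_iff]
      constructor
      · rintro ⟨hsto, hinv⟩
        obtain ⟨ε, δ, hε, hδ, rfl⟩ := classification hsto hinv
        rcases hε with rfl | rfl <;> rcases hδ with rfl | rfl <;> tauto
      · rintro (rfl | rfl | rfl | rfl) <;>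
          exact isRightOrder_R (by norm_num) (by norm_num)
    rw [hset]
    have d1 := fun h => (R_inj (Or.inl rfl) (Or.inl rfl) (Or.inl rfl) (Or.inr rfl) h).2
    have d2 := fun h => (R_inj (Or.inl rfl) (Or.inl rfl) (Or.inr rfl) (Or.inl rfl) h).1
    have d3 := fun h => (R_inj (Or.inl rfl) (Or.inl rfl) (Or.inr rfl) (Or.inr rfl) h).1
    have d4 := fun h => (R_inj (Or.inl rfl) (Or.inr rfl) (Or.inr rfl) (Or.inl rfl) h).1
    have d5 := fun h => (R_inj (Or.inl rfl) (Or.inr rfl) (Or.inr rfl) (Or.inr rfl) h).1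
    have d6 := fun h => (R_inj (Or.inr rfl) (Or.inl rfl) (Or.inr rfl) (Or.inr rfl) h).2
    rw [Set.ncard_insert_of_notMem (by
        simp only [Set.mem_insert_iff, Set.mem_singleton_iff]
        push_neg
        exact ⟨fun h => by have := d1 h; omega, fun h => by have := d2 h; omega,
          fun h => by have := d3 h; omega⟩),
      Set.ncard_insert_of_notMem (by
        simp only [Set.mem_insert_iff, Set.mem_singleton_iff]
        push_neg
        exact ⟨fun h => by have := d4 h; omega, fun h => by have := d5 h; omega⟩),
      Set.ncard_insert_of_notMem (by
        simp only [Set.mem_singleton_iff]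
        exact fun h => by have := d6 h; omega),
      Set.ncard_singleton]
  · intro r hr
    obtain ⟨ε, δ, hε, hδ, rfl⟩ := classification hr.1 hr.2
    have hl := leastPos_R hε hδ
    rcases hε with rfl | rfl
    · left
      rw [show (PresentedGroup.of (rels := kleinRels) false) = a ^ (1:ℤ) by
        rw [zpow_one]; rfl]
      exact hl
    · right
      rw [show (PresentedGroup.of (rels := kleinRels) false)⁻¹ = a ^ (-1:ℤ) by
        rw [zpow_neg_one]; rfl]
      exact hl
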